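/- arXiv:1801.08090 — 14 statements merged into one kernel-verified Lean document; each statement's English description precedes it below -/
import Mathlib

section
/- Associativity of channel operators: for compatible channels C₁ : X×Y₁ → ℝ, C₂ : X×Y₂ → ℝ, C₃ : X×Y₃ → ℝ and p, q ∈ [0,1] with pq ≠ 1, setting p' = pq and q' = (q−pq)/(1−pq), one has (i) (C₁ ∥ C₂) ∥ C₃ ≐ C₁ ∥ (C₂ ∥ C₃); (ii) (C₁ ⊞_p C₂) ⊞_q C₃ ≐ C₁ ⊞_{p'} (C₂ ⊞_{q'} C₃); and (iii) (C₁ ⊕_p C₂) ⊕_q C₃ = C₁ ⊕_{p'} (C₂ ⊕_{q'} C₃) as functions on X×(Y₁ ∪ Y₂ ∪ Y₃). -/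
open Finset

/-- A channel with input set `X` and output set `Y`: entries are nonnegative
and each row sums to `1`. -/
def IsChannel {X Y : Type*} [Fintype Y] (C : X → Y → ℝ) : Prop :=
  (∀ x y, 0 ≤ C x y) ∧ ∀ x, ∑ y, C x y = 1

/-- A channel with input set `X` whose output set is the finset `S` of a common
ambient type `Ω`: entries are nonnegative, each row sums to `1` over `S`, and
entries vanish outside `S`. -/
def IsChannelOn {X Ω : Type*} (S : Finset Ω) (C : X → Ω → ℝ) : Prop :=
  (∀ x y, 0 ≤ C x y) ∧ (∀ x, ∑ y ∈ S, C x y = 1) ∧ ∀ x y, y ∉ S → C x y = 0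

/-- Parallel composition `C₁ ∥ C₂`. -/
def par {X Y₁ Y₂ : Type*} (C₁ : X → Y₁ → ℝ) (C₂ : X → Y₂ → ℝ) : X → Y₁ × Y₂ → ℝ :=
  fun x y => C₁ x y.1 * C₂ x y.2

/-- Visible choice `C₁ ⊞_p C₂`, on the disjoint union of the output sets. -/
def vis {X Y₁ Y₂ : Type*} (p : ℝ) (C₁ : X → Y₁ → ℝ) (C₂ : X → Y₂ → ℝ) : X → Y₁ ⊕ Y₂ → ℝ :=
  fun x => Sum.elim (fun y => p * C₁ x y) (fun y => (1 - p) * C₂ x y)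

/-- Hidden choice `C₁ ⊕_p C₂` for channels whose output sets lie in a common
ambient type (pointwise convex combination; this agrees with the case analysis
on `Y₁ ∩ Y₂`, `Y₁ \ Y₂`, `Y₂ \ Y₁` since channels vanish outside their output sets). -/
def hid {X Ω : Type*} (p : ℝ) (C₁ C₂ : X → Ω → ℝ) : X → Ω → ℝ :=
  fun x y => p * C₁ x y + (1 - p) * C₂ x y

/-- Equality up to a permutation of the output set, `C₁ ≐ C₂`. -/
def PermEq {X Y₁ Y₂ : Type*} (C₁ : X → Y₁ → ℝ) (C₂ : X → Y₂ → ℝ) : Prop :=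
  ∃ ψ : Y₁ ≃ Y₂, ∀ x y, C₁ x y = C₂ x (ψ y)

/-- Cascading `CD` of channels. -/
def cascade {X Y Z : Type*} [Fintype Y] (C : X → Y → ℝ) (D : Y → Z → ℝ) : X → Z → ℝ :=
  fun x z => ∑ y, C x y * D y z

/-- `Refines C₁ C₂` (written `C₁ ⊑ C₂`): there is a channel `D` with `C₁D = C₂`. -/
def Refines {X Y₁ Y₂ : Type*} [Fintype Y₁] [Fintype Y₂] (C₁ : X → Y₁ → ℝ)
    (C₂ : X → Y₂ → ℝ) : Prop :=
  ∃ D : Y₁ → Y₂ → ℝ, IsChannel D ∧ cascade C₁ D = C₂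

/-- Equivalence of channels: mutual refinement. -/
def EquivCh {X Y₁ Y₂ : Type*} [Fintype Y₁] [Fintype Y₂] (C₁ : X → Y₁ → ℝ)
    (C₂ : X → Y₂ → ℝ) : Prop :=
  Refines C₁ C₂ ∧ Refines C₂ C₁

/-- A prior: a probability distribution on the finite input set `X`. -/
def IsPrior {X : Type*} [Fintype X] (π : X → ℝ) : Prop :=
  (∀ x, 0 ≤ π x) ∧ ∑ x, π x = 1

/-- A gain function `g : W × X → [0,1]`. -/
def IsGain {W X : Type*} (g : W → X → ℝ) : Prop :=
  ∀ w x, 0 ≤ g w x ∧ g w x ≤ 1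

/-- Posterior g-vulnerability `V_g[π, C]`. -/
noncomputable def postV {W X Y : Type*} [Fintype W] [Nonempty W] [Fintype X] [Fintype Y]
    (π : X → ℝ) (g : W → X → ℝ) (C : X → Y → ℝ) : ℝ :=
  ∑ y, univ.sup' univ_nonempty fun w => ∑ x, C x y * π x * g w x

/-- Associativity of the channel operators (Proposition: Associative Properties). -/
theorem associativity_of_operators {X Ω : Type*} [Fintype Ω] [DecidableEq Ω]
    (Y₁ Y₂ Y₃ : Finset Ω) (C₁ C₂ C₃ : X → Ω → ℝ)
    (h₁ : IsChannelOn Y₁ C₁) (h₂ : IsChannelOn Y₂ C₂) (h₃ : IsChannelOn Y₃ C₃)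
    (p q : ℝ) (hp : p ∈ Set.Icc (0:ℝ) 1) (hq : q ∈ Set.Icc (0:ℝ) 1)
    (hpq : p * q ≠ 1) :
    PermEq (par (par C₁ C₂) C₃) (par C₁ (par C₂ C₃)) ∧
    PermEq (vis q (vis p C₁ C₂) C₃)
      (vis (p * q) C₁ (vis ((q - p * q) / (1 - p * q)) C₂ C₃)) ∧
    ∀ x : X, ∀ y ∈ Y₁ ∪ Y₂ ∪ Y₃,
      hid q (hid p C₁ C₂) C₃ x y
        = hid (p * q) C₁ (hid ((q - p * q) / (1 - p * q)) C₂ C₃) x y := by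
  have hne : (1 : ℝ) - p * q ≠ 0 := by
    intro h
    apply hpq
    linarith
  have hne' : (1 : ℝ) - q * p ≠ 0 := by rw [mul_comm]; exact hne
  have hq1 : (1 - p * q) * ((q - p * q) / (1 - p * q)) = q - p * q := by
    field_simp
  have hq2 : (1 - p * q) * (1 - (q - p * q) / (1 - p * q)) = 1 - q := by
    field_simp
    ring
  refine ⟨⟨Equiv.prodAssoc Ω Ω Ω, ?_⟩, ⟨Equiv.sumAssoc Ω Ω Ω, ?_⟩, ?_⟩
  · rintro x ⟨⟨y₁, y₂⟩, y₃⟩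
    simp [par, Equiv.prodAssoc, mul_assoc]
  · rintro x ((y | y) | y) <;> simp [vis, Equiv.sumAssoc] <;>
      (try field_simp) <;> (try ring)
  · intro x y _
    simp only [hid]
    field_simp
    ring
end

section
/- Null channel properties: let C₁ : X×Y₁ → ℝ be a channel, R a null channel compatible with C₁, and p ∈ [0,1]. Then (i) (C₁ ∥ R) ≡ C₁; (ii) C₁ ⊑ (C₁ ⊞_p R); and (iii) C₁ ⊑ (C₁ ⊕_p R). -/
open Finset

-- helpers
lemma rowsum_univ {X Ω : Type*} [Fintype Ω] {S : Finset Ω} {C : X → Ω → ℝ}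
    (h : IsChannelOn S C) (x : X) : ∑ y, C x y = 1 := by
  rw [← Finset.sum_subset (Finset.subset_univ S) (fun y _ hy => h.2.2 x y hy)]
  exact h.2.1 x

open Classical in
lemma exists_channel {Y₁ Y₂ : Type*} [Fintype Y₁] [Fintype Y₂]
    (h : IsEmpty Y₁ ∨ Nonempty Y₂) : ∃ D : Y₁ → Y₂ → ℝ, IsChannel D := by
  classical
  rcases h with h | h
  · exact ⟨fun y _ => 0, fun y => isEmptyElim y, fun y => isEmptyElim y⟩
  · obtain ⟨y₀⟩ := h
    classical
    refine ⟨fun _ z => if z = y₀ then 1 else 0, fun y z => by positivity, fun y => by simp⟩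

lemma refines_trivial {X Y₁' Y₂' : Type*} [Fintype Y₁'] [Fintype Y₂'] [IsEmpty X]
    (h : IsEmpty Y₁' ∨ Nonempty Y₂') (A : X → Y₁' → ℝ) (B : X → Y₂' → ℝ) : Refines A B := by
  obtain ⟨D, hD⟩ := exists_channel h
  exact ⟨D, hD, funext fun x => isEmptyElim x⟩


/-- Null channel properties -/
theorem null_channel_properties {X Ω : Type*} [Fintype Ω]
    (Y₁ YR : Finset Ω) (C₁ R : X → Ω → ℝ)
    (h₁ : IsChannelOn Y₁ C₁) (hR : IsChannelOn YR R)
    (hnull : ∀ x x' y, R x y = R x' y)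
    (p : ℝ) (hp : p ∈ Set.Icc (0:ℝ) 1) :
    EquivCh (par C₁ R) C₁ ∧
    Refines C₁ (vis p C₁ R) ∧
    Refines C₁ (hid p C₁ R) := by
  classical
  obtain ⟨hp0, hp1⟩ := hp
  by_cases hX : Nonempty X
  case neg =>
    have hXe : IsEmpty X := not_nonempty_iff.mp hX
    rcases isEmpty_or_nonempty Ω with h | h
    · exact ⟨⟨refines_trivial (Or.inl inferInstance) _ _,
              refines_trivial (Or.inl inferInstance) _ _⟩,
             refines_trivial (Or.inl inferInstance) _ _,
             refines_trivial (Or.inl inferInstance) _ _⟩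
    · exact ⟨⟨refines_trivial (Or.inr inferInstance) _ _,
              refines_trivial (Or.inr inferInstance) _ _⟩,
             refines_trivial (Or.inr inferInstance) _ _,
             refines_trivial (Or.inr inferInstance) _ _⟩
  case pos =>
    obtain ⟨x₀⟩ := hX
    have hC₁sum : ∀ x, ∑ y, C₁ x y = 1 := rowsum_univ h₁
    have hRsum : ∀ x, ∑ y, R x y = 1 := rowsum_univ hR
    refine ⟨⟨?_, ?_⟩, ?_, ?_⟩
    · -- Refines (par C₁ R) C₁
      refine ⟨fun yz w => if yz.1 = w then 1 else 0,
        ⟨fun y z => by positivity, fun y => by simp⟩, ?_⟩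
      funext x w
      have key : ∀ a : Ω, (∑ b, C₁ x a * R x b * if a = w then 1 else 0)
          = if a = w then C₁ x a else 0 := by
        intro a
        split
        · simp [mul_one, ← Finset.mul_sum, hRsum x]
        · simp
      simp only [cascade, par, Fintype.sum_prod_type]
      rw [Finset.sum_congr rfl (fun a _ => key a)]
      simp [Finset.sum_ite_eq']
    · -- Refines C₁ (par C₁ R)
      refine ⟨fun y ab => if ab.1 = y then R x₀ ab.2 else 0, ⟨fun y ab => ?_, fun y => ?_⟩, ?_⟩
      · dsimp only; split
        · exact hR.1 x₀ _
        · exact le_refl 0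
      · simp [Fintype.sum_prod_type_right, Finset.sum_ite_eq', hRsum x₀]
      · funext x ab
        simp only [cascade, par, mul_ite, mul_zero]
        simp [Finset.sum_ite_eq, hnull x₀ x ab.2]
    · -- Refines C₁ (vis p C₁ R)
      refine ⟨fun y => Sum.elim (fun a => p * if a = y then 1 else 0) (fun b => (1 - p) * R x₀ b),
        ⟨fun y z => ?_, fun y => ?_⟩, ?_⟩
      · cases z with
        | inl a => dsimp only [Sum.elim_inl]; positivity
        | inr b => exact mul_nonneg (by linarith) (hR.1 x₀ b)
      · simp [Fintype.sum_sum_type, ← Finset.mul_sum, Finset.sum_ite_eq', hRsum x₀]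
      · funext x z
        cases z with
        | inl a =>
          simp only [cascade, vis, Sum.elim_inl, mul_ite, mul_one, mul_zero]
          simp [Finset.sum_ite_eq, mul_comm]
        | inr b =>
          simp only [cascade, vis, Sum.elim_inr, ← Finset.sum_mul]
          rw [hC₁sum x, one_mul, hnull x₀ x b]
    · -- Refines C₁ (hid p C₁ R)
      refine ⟨fun y w => p * (if y = w then 1 else 0) + (1 - p) * R x₀ w,
        ⟨fun y w => add_nonneg (mul_nonneg hp0 (by positivity)) (mul_nonneg (by linarith) (hR.1 x₀ w)), fun y => ?_⟩, ?_⟩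
      · simp [Finset.sum_add_distrib, ← Finset.mul_sum, Finset.sum_ite_eq, hRsum x₀]
      · funext x w
        simp only [cascade, hid]
        rw [Finset.sum_congr rfl (fun y _ => show C₁ x y * (p * (if y = w then 1 else 0) + (1-p) * R x₀ w)
          = (if y = w then p * C₁ x y else 0) + C₁ x y * ((1-p) * R x₀ w) by split <;> ring),
          Finset.sum_add_distrib, Finset.sum_ite_eq' Finset.univ w (fun y => p * C₁ x y),
          ← Finset.sum_mul, hC₁sum x, one_mul, hnull x₀ x w]
        simp
end

section
/- Transparent channel properties: let C₁ : X×Y₁ → ℝ be a channel, T a transparent channel compatible with C₁, and p ∈ [0,1]. Then (i) (C₁ ∥ T) ≡ T; and (ii) (C₁ ⊞_p T) ⊑ C₁. -/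
open Finset

/-- Transparent channel properties (Proposition: Null and Transparent Channel
Properties, transparent-channel part). -/
theorem transparent_channel_properties {X Y₁ YT : Type*} [Nonempty X]
    [Fintype Y₁] [Fintype YT]
    (C₁ : X → Y₁ → ℝ) (T : X → YT → ℝ)
    (h₁ : IsChannel C₁) (hT : IsChannel T)
    (htrans : ∀ y x x', 0 < T x y → 0 < T x' y → x = x')
    (p : ℝ) (hp : p ∈ Set.Icc (0:ℝ) 1) :
    EquivCh (par C₁ T) T ∧ Refines (vis p C₁ T) C₁ := by
  classical
  obtain ⟨hC₁pos, hC₁sum⟩ := h₁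
  obtain ⟨hTpos, hTsum⟩ := hT
  obtain ⟨hp0, hp1⟩ := hp
  let x₀ : YT → X := fun z => if h : ∃ x, 0 < T x z then h.choose else Classical.arbitrary X
  have key : ∀ (x : X) (z : YT) (y : Y₁), T x z * C₁ (x₀ z) y = T x z * C₁ x y := by
    intro x z y
    rcases (hTpos x z).lt_or_eq with hpos | hzero
    · have hex : ∃ x, 0 < T x z := ⟨x, hpos⟩
      have hx0 : x₀ z = hex.choose := by simp [x₀, dif_pos hex]
      have := htrans z hex.choose x hex.choose_spec hpos
      rw [hx0, this]
    · rw [← hzero]; ring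
  refine ⟨⟨⟨fun u z => if z = u.2 then 1 else 0, ⟨?_, ?_⟩, ?_⟩,
    ⟨fun z u => if u.2 = z then C₁ (x₀ z) u.1 else 0, ⟨?_, ?_⟩, ?_⟩⟩,
    ⟨Sum.elim (fun y y' => if y' = y then 1 else 0) (fun z y' => C₁ (x₀ z) y'),
      ⟨?_, ?_⟩, ?_⟩⟩
  · intro u z; dsimp only; split <;> norm_num
  · intro u; simp
  · funext x z
    simp only [cascade, par, Fintype.sum_prod_type, mul_ite, mul_one, mul_zero]
    simp only [Finset.sum_ite_eq, Finset.mem_univ, if_true]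
    rw [← Finset.sum_mul, hC₁sum, one_mul]
  · intro z u; dsimp only; split
    · exact hC₁pos _ _
    · exact le_rfl
  · intro z
    simp only [Fintype.sum_prod_type]
    rw [Finset.sum_comm]
    simp [Finset.sum_ite_eq, hC₁sum]
  · funext x u
    simp only [cascade, mul_ite, mul_zero, Finset.sum_ite_eq, Finset.mem_univ, if_true]
    rw [key, par, mul_comm]
  · intro u y'
    cases u with
    | inl y => simp only [Sum.elim_inl]; split <;> norm_num
    | inr z => exact hC₁pos _ _
  · intro u
    cases u with
    | inl y => simp
    | inr z => simp [hC₁sum]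
  · funext x y
    simp only [cascade, vis, Fintype.sum_sum_type, Sum.elim_inl, Sum.elim_inr,
      mul_ite, mul_one, mul_zero]
    simp only [Finset.sum_ite_eq, Finset.mem_univ, if_true]
    have : ∀ z, (1 - p) * T x z * C₁ (x₀ z) y = (1 - p) * (T x z * C₁ x y) := by
      intro z; rw [mul_assoc, key]
    rw [Finset.sum_congr rfl fun z _ => this z, ← Finset.mul_sum, ← Finset.sum_mul, hTsum,
      one_mul]
    ring
end

section
/- Idempotency of channel operators: for any channel C₁ : X×Y₁ → ℝ and any p ∈ [0,1], (i) C₁ ∥ C₁ ⊑ C₁; (ii) C₁ ⊞_p C₁ ≡ C₁; and (iii) C₁ ⊕_p C₁ = C₁. -/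
open Finset

/-- Idempotency of the channel operators (Proposition: Idempotency). -/
theorem idempotency_of_operators {X Y₁ : Type*} [Fintype Y₁]
    (C₁ : X → Y₁ → ℝ) (h₁ : IsChannel C₁)
    (p : ℝ) (hp : p ∈ Set.Icc (0:ℝ) 1) :
    Refines (par C₁ C₁) C₁ ∧
    EquivCh (vis p C₁ C₁) C₁ ∧
    hid p C₁ C₁ = C₁ := by
  classical
  obtain ⟨hpos, hsum⟩ := h₁
  obtain ⟨hp0, hp1⟩ := hp
  refine ⟨?_, ⟨?_, ?_⟩, ?_⟩
  · -- par
    refine ⟨fun y z => if z = y.1 then 1 else 0, ⟨?_, ?_⟩, ?_⟩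
    · intro y z; positivity
    · intro y; simp
    · funext x z
      simp only [cascade, par, Fintype.sum_prod_type, mul_ite, mul_one, mul_zero]
      rw [Finset.sum_comm]
      simp only [Finset.sum_ite_eq, Finset.mem_univ, if_true]
      rw [← Finset.mul_sum, hsum, mul_one]
  · -- vis ⊑ C₁ direction: D from Y₁⊕Y₁ to Y₁
    refine ⟨fun y z => if z = Sum.elim id id y then 1 else 0, ⟨?_, ?_⟩, ?_⟩
    · intro y z; positivity
    · intro y; simp
    · funext x z
      simp only [cascade, vis, Fintype.sum_sum_type, Sum.elim_inl, Sum.elim_inr, id,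
        mul_ite, mul_one, mul_zero, Finset.sum_ite_eq, Finset.mem_univ, if_true]
      show (∑ a, if z = a then p * C₁ x a else 0) + (∑ a, if z = a then (1 - p) * C₁ x a else 0) = C₁ x z
      simp only [Finset.sum_ite_eq, Finset.mem_univ, if_true]
      ring
  · -- C₁ ⊑ vis direction
    refine ⟨fun y z => Sum.elim (fun z₁ => if z₁ = y then p else 0)
        (fun z₂ => if z₂ = y then 1 - p else 0) z, ⟨?_, ?_⟩, ?_⟩
    · intro y z
      rcases z with z | z <;> dsimp <;> split <;> linarith
    · intro y
      simp [Fintype.sum_sum_type]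
    · funext x z
      rcases z with z | z <;>
        simp [cascade, vis, mul_ite, Finset.sum_ite_eq', mul_comm]
  · funext x y
    simp only [hid]; ring
end

section
/- Distribution over different operators: for compatible channels C₁ : X×Y₁ → ℝ, C₂ : X×Y₂ → ℝ, C₃ : X×Y₃ → ℝ and p, q ∈ [0,1], (i) C₁ ∥ (C₂ ⊞_p C₃) ≐ (C₁ ∥ C₂) ⊞_p (C₁ ∥ C₃); (ii) C₁ ∥ (C₂ ⊕_p C₃) = (C₁ ∥ C₂) ⊕_p (C₁ ∥ C₃); and (iii) C₁ ⊞_p (C₂ ⊕_q C₃) = (C₁ ⊞_p C₂) ⊕_q (C₁ ⊞_p C₃). -/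
open Finset

/-- Distribution over different operators (Proposition: Distribution over
different operators). -/
theorem distribution_over_different_operators {X Y₁ Ω : Type*} [Fintype Y₁] [Fintype Ω]
    (C₁ : X → Y₁ → ℝ) (h₁ : IsChannel C₁)
    (Y₂ Y₃ : Finset Ω) (C₂ C₃ : X → Ω → ℝ)
    (h₂ : IsChannelOn Y₂ C₂) (h₃ : IsChannelOn Y₃ C₃)
    (p q : ℝ) (hp : p ∈ Set.Icc (0:ℝ) 1) (hq : q ∈ Set.Icc (0:ℝ) 1) :
    PermEq (par C₁ (vis p C₂ C₃)) (vis p (par C₁ C₂) (par C₁ C₃)) ∧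
    par C₁ (hid p C₂ C₃) = hid p (par C₁ C₂) (par C₁ C₃) ∧
    vis p C₁ (hid q C₂ C₃) = hid q (vis p C₁ C₂) (vis p C₁ C₃) := by
  refine ⟨⟨Equiv.prodSumDistrib Y₁ Ω Ω, ?_⟩, ?_, ?_⟩
  · rintro x ⟨y1, y2 | y2⟩ <;> simp [par, vis] <;> ring
  · funext x ⟨y1, y2⟩
    simp [par, hid]; ring
  · funext x y
    cases y <;> simp [vis, hid, par] <;> ring
end

section
/- Cascading and visible choice: let C₁ : X×Y₁ → ℝ and C₂ : X×Y₂ → ℝ be compatible channels, D₁ : Y₁×Z₁ → ℝ, D₂ : Y₂×Z₂ → ℝ be channels, and p ∈ [0,1]. Then (C₁D₁) ⊞_p (C₂D₂) = (C₁ ⊞_p C₂) D^⊞, where D^⊞ : (Y₁ ⊔ Y₂)×(Z₁ ⊔ Z₂) → ℝ is defined by D^⊞((y,i),(z,j)) = D₁(y,z) if i = j = 1; = D₂(y,z) if i = j = 2; and = 0 otherwise. -/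
open Finset

/-- Cascading and visible choice. -/
theorem cascading_and_visible_choice {X Y₁ Y₂ Z₁ Z₂ : Type*}
    [Fintype Y₁] [Fintype Y₂] [Fintype Z₁] [Fintype Z₂]
    (C₁ : X → Y₁ → ℝ) (C₂ : X → Y₂ → ℝ)
    (D₁ : Y₁ → Z₁ → ℝ) (D₂ : Y₂ → Z₂ → ℝ)
    (h₁ : IsChannel C₁) (h₂ : IsChannel C₂)
    (hD₁ : IsChannel D₁) (hD₂ : IsChannel D₂)
    (p : ℝ) (hp : p ∈ Set.Icc (0:ℝ) 1) :
    vis p (cascade C₁ D₁) (cascade C₂ D₂)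
      = cascade (vis p C₁ C₂)
          (fun yi zj =>
            match yi, zj with
            | Sum.inl y, Sum.inl z => D₁ y z
            | Sum.inr y, Sum.inr z => D₂ y z
            | _, _ => 0) := by
  funext x z
  cases z with
  | inl z =>
    simp [vis, cascade, Fintype.sum_sum_type, Finset.mul_sum, mul_comm, mul_left_comm, mul_assoc]
  | inr z =>
    simp [vis, cascade, Fintype.sum_sum_type, Finset.mul_sum, mul_comm, mul_left_comm, mul_assoc]
end

section
/- Upper and lower bounds for posterior vulnerability with respect to parallel composition: let C₁ : X×Y₁ → ℝ and C₂ : X×Y₂ → ℝ be compatible channels, π a prior on X, g : W×X → [0,1] a gain function, and let X' = {x ∈ X : ∃ w ∈ W with π(x)·g(w,x) > 0} (with the convention that a maximum over the empty set equals 0). Then V_g[π, C₁ ∥ C₂] ≥ max(V_g[π,C₁], V_g[π,C₂]), and V_g[π, C₁ ∥ C₂] ≤ min( V_g[π,C₁] · Σ_{y₂∈Y₂} max_{x∈X'} C₂(x,y₂), V_g[π,C₂] · Σ_{y₁∈Y₁} max_{x∈X'} C₁(x,y₁) ). -/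
open Finset

open Classical in
/-- The maximum of `f` over `{a | P a}`, with the convention that the maximum
over the empty set is `0`. -/
noncomputable def maxOverP {α : Type*} [Fintype α] (P : α → Prop) (f : α → ℝ) : ℝ :=
  if h : (Finset.univ.filter P).Nonempty then (Finset.univ.filter P).sup' h f else 0

lemma maxOverP_nonneg {α : Type*} [Fintype α] (P : α → Prop) (f : α → ℝ)
    (hf : ∀ a, 0 ≤ f a) : 0 ≤ maxOverP P f := by
  classical
  unfold maxOverP
  split_ifs with h
  · obtain ⟨a, ha⟩ := h
    exact le_trans (hf a) (Finset.le_sup' f ha)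
  · exact le_refl 0

lemma le_maxOverP {α : Type*} [Fintype α] {P : α → Prop} {f : α → ℝ} {a : α}
    (ha : P a) : f a ≤ maxOverP P f := by
  classical
  unfold maxOverP
  have hmem : a ∈ Finset.univ.filter P := by simp [ha]
  rw [dif_pos ⟨a, hmem⟩]
  exact Finset.le_sup' f hmem

/-- Upper and lower bounds for posterior vulnerability w.r.t. parallel composition. -/
theorem vulnerability_bounds_parallel {W X Y₁ Y₂ : Type*}
    [Fintype W] [Nonempty W] [Fintype X] [Fintype Y₁] [Fintype Y₂]
    (C₁ : X → Y₁ → ℝ) (C₂ : X → Y₂ → ℝ)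
    (h₁ : IsChannel C₁) (h₂ : IsChannel C₂)
    (π : X → ℝ) (hπ : IsPrior π) (g : W → X → ℝ) (hg : IsGain g) :
    max (postV π g C₁) (postV π g C₂) ≤ postV π g (par C₁ C₂) ∧
    postV π g (par C₁ C₂) ≤
      min (postV π g C₁ * ∑ y₂, maxOverP (fun x => ∃ w, 0 < π x * g w x) (fun x => C₂ x y₂))
          (postV π g C₂ * ∑ y₁, maxOverP (fun x => ∃ w, 0 < π x * g w x) (fun x => C₁ x y₁)) := by
  obtain ⟨h₁n, h₁s⟩ := h₁
  obtain ⟨h₂n, h₂s⟩ := h₂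
  obtain ⟨hπn, -⟩ := hπ
  set P : X → Prop := fun x => ∃ w, 0 < π x * g w x with hP
  have hpg : ∀ (w : W) (x : X), 0 ≤ π x * g w x := fun w x =>
    mul_nonneg (hπn x) (hg w x).1
  have key : ∀ (c d : X → ℝ), (∀ x, 0 ≤ c x) → (∀ x, 0 ≤ d x) →
      (univ.sup' univ_nonempty fun w => ∑ x, c x * d x * π x * g w x)
        ≤ (univ.sup' univ_nonempty fun w => ∑ x, c x * π x * g w x)
            * maxOverP P d := by
    intro c d hD₁ hD₂
    have hM : 0 ≤ maxOverP P d := maxOverP_nonneg _ _ hD₂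
    apply Finset.sup'_le
    intro w _
    calc ∑ x, c x * d x * π x * g w x
        ≤ ∑ x, (c x * π x * g w x) * maxOverP P d := by
          apply Finset.sum_le_sum
          intro x _
          rcases (hpg w x).eq_or_lt with hz | hpos
          · have e1 : c x * d x * π x * g w x
                = (c x * d x) * (π x * g w x) := by ring
            have e2 : (c x * π x * g w x) * maxOverP P d
                = (c x * maxOverP P d) * (π x * g w x) := by ring
            rw [e1, e2, ← hz, mul_zero, mul_zero]
          · have hx : P x := ⟨w, hpos⟩
            have hle : d x ≤ maxOverP P d := le_maxOverP hx
            have e1 : c x * d x * π x * g w x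
                = (c x * π x * g w x) * d x := by ring
            rw [e1]
            exact mul_le_mul_of_nonneg_left hle
              (mul_nonneg (mul_nonneg (hD₁ x) (hπn x)) (hg w x).1)
      _ = (∑ x, c x * π x * g w x) * maxOverP P d :=
            (Finset.sum_mul _ _ _).symm
      _ ≤ _ := mul_le_mul_of_nonneg_right
            (Finset.le_sup' (fun w => ∑ x, c x * π x * g w x) (Finset.mem_univ w)) hM
  constructor
  · rw [max_le_iff]
    constructor
    · simp only [postV, par]
      rw [Fintype.sum_prod_type]
      apply Finset.sum_le_sum
      intro y₁ _
      apply Finset.sup'_le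
      intro w _
      have hfac : ∀ x : X, C₁ x y₁ * π x * g w x
          = ∑ y₂, C₁ x y₁ * C₂ x y₂ * π x * g w x := by
        intro x
        have h : ∑ y₂, C₁ x y₁ * C₂ x y₂ * π x * g w x
            = (C₁ x y₁ * π x * g w x) * ∑ y₂, C₂ x y₂ := by
          rw [Finset.mul_sum]
          exact Finset.sum_congr rfl fun y₂ _ => by ring
        rw [h, h₂s x, mul_one]
      calc ∑ x, C₁ x y₁ * π x * g w x
          = ∑ y₂, ∑ x, C₁ x y₁ * C₂ x y₂ * π x * g w x := by
            rw [← Finset.sum_comm]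
            exact Finset.sum_congr rfl fun x _ => hfac x
        _ ≤ ∑ y₂, univ.sup' univ_nonempty
              fun w => ∑ x, C₁ x y₁ * C₂ x y₂ * π x * g w x :=
            Finset.sum_le_sum fun y₂ _ =>
              Finset.le_sup' (fun w => ∑ x, C₁ x y₁ * C₂ x y₂ * π x * g w x)
                (Finset.mem_univ w)
    · simp only [postV, par]
      rw [Fintype.sum_prod_type_right]
      apply Finset.sum_le_sum
      intro y₂ _
      apply Finset.sup'_le
      intro w _
      have hfac : ∀ x : X, C₂ x y₂ * π x * g w x
          = ∑ y₁, C₁ x y₁ * C₂ x y₂ * π x * g w x := by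
        intro x
        have h : ∑ y₁, C₁ x y₁ * C₂ x y₂ * π x * g w x
            = (C₂ x y₂ * π x * g w x) * ∑ y₁, C₁ x y₁ := by
          rw [Finset.mul_sum]
          exact Finset.sum_congr rfl fun y₁ _ => by ring
        rw [h, h₁s x, mul_one]
      calc ∑ x, C₂ x y₂ * π x * g w x
          = ∑ y₁, ∑ x, C₁ x y₁ * C₂ x y₂ * π x * g w x := by
            rw [← Finset.sum_comm]
            exact Finset.sum_congr rfl fun x _ => hfac x
        _ ≤ ∑ y₁, univ.sup' univ_nonempty
              fun w => ∑ x, C₁ x y₁ * C₂ x y₂ * π x * g w x :=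
            Finset.sum_le_sum fun y₁ _ =>
              Finset.le_sup' (fun w => ∑ x, C₁ x y₁ * C₂ x y₂ * π x * g w x)
                (Finset.mem_univ w)
  · rw [le_min_iff]
    constructor
    · simp only [postV, par]
      rw [Fintype.sum_prod_type]
      calc ∑ y₁, ∑ y₂, univ.sup' univ_nonempty
            (fun w => ∑ x, C₁ x y₁ * C₂ x y₂ * π x * g w x)
          ≤ ∑ y₁, ∑ y₂, (univ.sup' univ_nonempty
              fun w => ∑ x, C₁ x y₁ * π x * g w x) * maxOverP P (fun x => C₂ x y₂) :=
            Finset.sum_le_sum fun y₁ _ => Finset.sum_le_sum fun y₂ _ =>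
              key (fun x => C₁ x y₁) (fun x => C₂ x y₂) (fun x => h₁n x y₁) (fun x => h₂n x y₂)
        _ = _ := by
            simp only [← Finset.mul_sum, ← Finset.sum_mul]
    · simp only [postV, par]
      rw [Fintype.sum_prod_type_right]
      calc ∑ y₂, ∑ y₁, univ.sup' univ_nonempty
            (fun w => ∑ x, C₁ x y₁ * C₂ x y₂ * π x * g w x)
          ≤ ∑ y₂, ∑ y₁, (univ.sup' univ_nonempty
              fun w => ∑ x, C₂ x y₂ * π x * g w x) * maxOverP P (fun x => C₁ x y₁) := by
            apply Finset.sum_le_sum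
            intro y₂ _
            apply Finset.sum_le_sum
            intro y₁ _
            refine le_trans (le_of_eq ?_) (key (fun x => C₂ x y₂) (fun x => C₁ x y₁) (fun x => h₂n x y₂) (fun x => h₁n x y₁))
            apply Finset.sup'_congr _ rfl
            intro w _
            exact Finset.sum_congr rfl fun x _ => by ring
        _ = _ := by
            simp only [← Finset.mul_sum, ← Finset.sum_mul]
end

section
/- Linearity of posterior vulnerability with respect to visible choice: let C₁ : X×Y₁ → ℝ and C₂ : X×Y₂ → ℝ be compatible channels, π a prior on X, g a gain function, and p ∈ [0,1]. Then V_g[π, C₁ ⊞_p C₂] = p·V_g[π,C₁] + (1−p)·V_g[π,C₂]. -/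
open Finset

lemma sup'_const_mul {W : Type*} [Fintype W] [Nonempty W] (p : ℝ) (hp : 0 ≤ p) (f : W → ℝ) :
    univ.sup' univ_nonempty (fun w => p * f w) = p * univ.sup' univ_nonempty f := by
  apply le_antisymm
  · apply Finset.sup'_le
    intro w _
    exact mul_le_mul_of_nonneg_left (Finset.le_sup' f (mem_univ w)) hp
  · obtain ⟨w, -, hw⟩ := Finset.exists_mem_eq_sup' (univ_nonempty) f
    rw [hw]
    exact Finset.le_sup' (fun w => p * f w) (mem_univ w)

/-- Linearity of posterior vulnerability w.r.t. visible choice. -/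
theorem vulnerability_linear_visible_choice {W X Y₁ Y₂ : Type*}
    [Fintype W] [Nonempty W] [Fintype X] [Fintype Y₁] [Fintype Y₂]
    (C₁ : X → Y₁ → ℝ) (C₂ : X → Y₂ → ℝ)
    (h₁ : IsChannel C₁) (h₂ : IsChannel C₂)
    (π : X → ℝ) (hπ : IsPrior π) (g : W → X → ℝ) (hg : IsGain g)
    (p : ℝ) (hp : p ∈ Set.Icc (0:ℝ) 1) :
    postV π g (vis p C₁ C₂) = p * postV π g C₁ + (1 - p) * postV π g C₂ := by
  obtain ⟨hp0, hp1⟩ := hp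
  unfold postV vis
  rw [Fintype.sum_sum_type, Finset.mul_sum, Finset.mul_sum]
  congr 1
  · apply Finset.sum_congr rfl
    intro y _
    rw [← sup'_const_mul p hp0]
    congr 1; ext w
    rw [Finset.mul_sum]
    apply Finset.sum_congr rfl
    intro x _
    simp [mul_assoc]
  · apply Finset.sum_congr rfl
    intro y _
    rw [← sup'_const_mul (1-p) (by linarith)]
    congr 1; ext w
    rw [Finset.mul_sum]
    apply Finset.sum_congr rfl
    intro x _
    simp [mul_assoc]
end

section
/- Upper and lower bounds for posterior vulnerability with respect to hidden choice: let C₁ : X×Y₁ → ℝ and C₂ : X×Y₂ → ℝ be compatible channels, π a prior on X, g a gain function, and p ∈ [0,1]. Then V_g[π, C₁ ⊕_p C₂] ≥ max( p·V_g[π,C₁], (1−p)·V_g[π,C₂] ), and V_g[π, C₁ ⊕_p C₂] ≤ p·V_g[π,C₁] + (1−p)·V_g[π,C₂]. -/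
open Finset

/-- Upper and lower bounds for posterior vulnerability w.r.t. hidden choice. -/
theorem vulnerability_bounds_hidden_choice {W X Ω : Type*}
    [Fintype W] [Nonempty W] [Fintype X] [Fintype Ω]
    (Y₁ Y₂ : Finset Ω) (C₁ C₂ : X → Ω → ℝ)
    (h₁ : IsChannelOn Y₁ C₁) (h₂ : IsChannelOn Y₂ C₂)
    (π : X → ℝ) (hπ : IsPrior π) (g : W → X → ℝ) (hg : IsGain g)
    (p : ℝ) (hp : p ∈ Set.Icc (0:ℝ) 1) :
    max (p * postV π g C₁) ((1 - p) * postV π g C₂) ≤ postV π g (hid p C₁ C₂) ∧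
    postV π g (hid p C₁ C₂) ≤ p * postV π g C₁ + (1 - p) * postV π g C₂ := by
  obtain ⟨hp0, hp1⟩ := hp
  have hq0 : 0 ≤ 1 - p := by linarith
  have nn1 : ∀ (x : X) (y : Ω) (w : W), 0 ≤ C₁ x y * π x * g w x := fun x y w =>
    mul_nonneg (mul_nonneg (h₁.1 x y) (hπ.1 x)) (hg w x).1
  have nn2 : ∀ (x : X) (y : Ω) (w : W), 0 ≤ C₂ x y * π x * g w x := fun x y w =>
    mul_nonneg (mul_nonneg (h₂.1 x y) (hπ.1 x)) (hg w x).1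
  have hsplit : ∀ (y : Ω) (w : W),
      ∑ x, hid p C₁ C₂ x y * π x * g w x
        = p * ∑ x, C₁ x y * π x * g w x + (1 - p) * ∑ x, C₂ x y * π x * g w x := by
    intro y w
    rw [Finset.mul_sum, Finset.mul_sum, ← Finset.sum_add_distrib]
    refine Finset.sum_congr rfl fun x _ => ?_
    simp [hid]; ring
  constructor
  · refine max_le ?_ ?_
    · rw [mul_comm, postV, postV, Finset.sum_mul]
      refine Finset.sum_le_sum fun y _ => ?_
      obtain ⟨w, hw, hweq⟩ := Finset.exists_mem_eq_sup' (Finset.univ_nonempty (α := W))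
        (fun w => ∑ x, C₁ x y * π x * g w x)
      rw [hweq]
      refine le_trans ?_ (Finset.le_sup' _ (Finset.mem_univ w))
      rw [hsplit y w, mul_comm]
      have : 0 ≤ (1 - p) * ∑ x, C₂ x y * π x * g w x :=
        mul_nonneg hq0 (Finset.sum_nonneg fun x _ => nn2 x y w)
      linarith
    · rw [mul_comm, postV, postV, Finset.sum_mul]
      refine Finset.sum_le_sum fun y _ => ?_
      obtain ⟨w, hw, hweq⟩ := Finset.exists_mem_eq_sup' (Finset.univ_nonempty (α := W))
        (fun w => ∑ x, C₂ x y * π x * g w x)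
      rw [hweq]
      refine le_trans ?_ (Finset.le_sup' _ (Finset.mem_univ w))
      rw [hsplit y w, mul_comm]
      have : 0 ≤ p * ∑ x, C₁ x y * π x * g w x :=
        mul_nonneg hp0 (Finset.sum_nonneg fun x _ => nn1 x y w)
      linarith
  · rw [postV, postV, postV, Finset.mul_sum, Finset.mul_sum, ← Finset.sum_add_distrib]
    refine Finset.sum_le_sum fun y _ => ?_
    refine Finset.sup'_le _ _ fun w _ => ?_
    rw [hsplit y w]
    have h1 := Finset.le_sup' (f := fun w => ∑ x, C₁ x y * π x * g w x) (Finset.mem_univ w)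
    have h2 := Finset.le_sup' (f := fun w => ∑ x, C₂ x y * π x * g w x) (Finset.mem_univ w)
    nlinarith
end

section
/- Ordering between operators: let C₁ : X×Y₁ → ℝ and C₂ : X×Y₂ → ℝ be compatible channels, π a prior on X, g a gain function, and p ∈ [0,1]. Then V_g[π, C₁ ∥ C₂] ≥ V_g[π, C₁ ⊞_p C₂] ≥ V_g[π, C₁ ⊕_p C₂]. -/
open Finset

open Finset in
private lemma mul_sup'_aux {W : Type*} [Fintype W] [Nonempty W] {c : ℝ} (hc : 0 ≤ c)
    (f : W → ℝ) :
    (univ.sup' univ_nonempty fun w => c * f w) = c * univ.sup' univ_nonempty f := by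
  apply le_antisymm
  · apply Finset.sup'_le
    intro w _
    exact mul_le_mul_of_nonneg_left (Finset.le_sup' f (mem_univ w)) hc
  · obtain ⟨w, _, hw⟩ := Finset.exists_mem_eq_sup' univ_nonempty f
    rw [hw]
    exact Finset.le_sup' (fun w => c * f w) (mem_univ w)

/-- Ordering between the operators (Corollary: Ordering between operators). -/
theorem ordering_between_operators {W X Ω : Type*}
    [Fintype W] [Nonempty W] [Fintype X] [Fintype Ω]
    (Y₁ Y₂ : Finset Ω) (C₁ C₂ : X → Ω → ℝ)
    (h₁ : IsChannelOn Y₁ C₁) (h₂ : IsChannelOn Y₂ C₂)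
    (π : X → ℝ) (hπ : IsPrior π) (g : W → X → ℝ) (hg : IsGain g)
    (p : ℝ) (hp : p ∈ Set.Icc (0:ℝ) 1) :
    postV π g (hid p C₁ C₂) ≤ postV π g (vis p C₁ C₂) ∧
    postV π g (vis p C₁ C₂) ≤ postV π g (par C₁ C₂) := by
  obtain ⟨hp0, hp1⟩ := hp
  have h1p : (0:ℝ) ≤ 1 - p := by linarith
  obtain ⟨h₁0, h₁s, h₁v⟩ := h₁
  obtain ⟨h₂0, h₂s, h₂v⟩ := h₂
  have htot₁ : ∀ x, ∑ y, C₁ x y = 1 := fun x => by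
    rw [← Finset.sum_subset (Finset.subset_univ Y₁) (fun y _ hy => h₁v x y hy)]
    exact h₁s x
  have htot₂ : ∀ x, ∑ y, C₂ x y = 1 := fun x => by
    rw [← Finset.sum_subset (Finset.subset_univ Y₂) (fun y _ hy => h₂v x y hy)]
    exact h₂s x
  have hvis : postV π g (vis p C₁ C₂)
      = p * postV π g C₁ + (1 - p) * postV π g C₂ := by
    unfold postV vis
    rw [Fintype.sum_sum_type]
    simp only [Sum.elim_inl, Sum.elim_inr]
    rw [Finset.mul_sum, Finset.mul_sum]
    congr 1
    · refine Finset.sum_congr rfl fun y _ => ?_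
      rw [← mul_sup'_aux hp0]
      congr 1; ext w
      rw [Finset.mul_sum]
      exact Finset.sum_congr rfl fun x _ => by ring
    · refine Finset.sum_congr rfl fun y _ => ?_
      rw [← mul_sup'_aux h1p]
      congr 1; ext w
      rw [Finset.mul_sum]
      exact Finset.sum_congr rfl fun x _ => by ring
  constructor
  · -- hid ≤ vis
    rw [hvis]
    unfold postV hid
    rw [Finset.mul_sum, Finset.mul_sum, ← Finset.sum_add_distrib]
    refine Finset.sum_le_sum fun y _ => ?_
    apply Finset.sup'_le
    intro w _
    have heq : ∑ x, (p * C₁ x y + (1 - p) * C₂ x y) * π x * g w x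
        = p * (∑ x, C₁ x y * π x * g w x) + (1 - p) * ∑ x, C₂ x y * π x * g w x := by
      rw [Finset.mul_sum, Finset.mul_sum, ← Finset.sum_add_distrib]
      exact Finset.sum_congr rfl fun x _ => by ring
    rw [heq]
    exact add_le_add
      (mul_le_mul_of_nonneg_left
        (Finset.le_sup' (fun w => ∑ x, C₁ x y * π x * g w x) (mem_univ w)) hp0)
      (mul_le_mul_of_nonneg_left
        (Finset.le_sup' (fun w => ∑ x, C₂ x y * π x * g w x) (mem_univ w)) h1p)
  · -- vis ≤ par
    rw [hvis]
    have key : ∀ (D E : X → Ω → ℝ), (∀ x, ∑ y, E x y = 1) →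
        (∀ x y, 0 ≤ E x y) →
        postV π g D ≤ ∑ y₁ : Ω, ∑ y₂ : Ω,
          univ.sup' univ_nonempty fun w => ∑ x, D x y₁ * E x y₂ * π x * g w x := by
      intro D E hE hE0
      refine Finset.sum_le_sum fun y₁ _ => ?_
      have : (univ.sup' univ_nonempty fun w => ∑ x, D x y₁ * π x * g w x)
          = univ.sup' univ_nonempty fun w => ∑ y₂ : Ω, ∑ x, D x y₁ * E x y₂ * π x * g w x := by
        congr 1; ext w
        rw [Finset.sum_comm]
        refine Finset.sum_congr rfl fun x _ => ?_
        rw [← Finset.sum_mul, ← Finset.sum_mul, ← Finset.mul_sum, hE x, mul_one]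
      rw [this]
      apply Finset.sup'_le
      intro w _
      exact Finset.sum_le_sum fun y₂ _ =>
        Finset.le_sup' (fun w => ∑ x, D x y₁ * E x y₂ * π x * g w x) (mem_univ w)
    have hpar : postV π g (par C₁ C₂) = ∑ y₁ : Ω, ∑ y₂ : Ω,
        univ.sup' univ_nonempty fun w => ∑ x, C₁ x y₁ * C₂ x y₂ * π x * g w x := by
      unfold postV par
      rw [Fintype.sum_prod_type]
    have k1 := key C₁ C₂ htot₂ h₂0
    have k2 : postV π g C₂ ≤ ∑ y₁ : Ω, ∑ y₂ : Ω,
        univ.sup' univ_nonempty fun w => ∑ x, C₁ x y₁ * C₂ x y₂ * π x * g w x := by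
      have := key C₂ C₁ htot₁ h₁0
      refine this.trans (le_of_eq ?_)
      rw [Finset.sum_comm]
      refine Finset.sum_congr rfl fun y₁ _ => Finset.sum_congr rfl fun y₂ _ => ?_
      congr 1; ext w
      exact Finset.sum_congr rfl fun x _ => by ring
    rw [hpar]
    nlinarith [k1, k2]
end

section
/- Relative monotonicity for visible choice: let C₁ : X×Y₁ → ℝ and C₂ : X×Y₂ → ℝ be compatible channels, π a prior on X, g a gain function, and p ∈ (0,1]. Then V_g[π,C₁] ≤ V_g[π,C₂] if and only if for every channel C compatible with C₁ and C₂, V_g[π, C₁ ⊞_p C] ≤ V_g[π, C₂ ⊞_p C]. -/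
open Finset

lemma sup'_const_mul_s14 {α : Type*} (s : Finset α) (hs : s.Nonempty) (c : ℝ) (hc : 0 ≤ c)
    (f : α → ℝ) : s.sup' hs (fun a => c * f a) = c * s.sup' hs f := by
  rw [Finset.comp_sup'_eq_sup'_comp hs (fun r => c * r)
    (fun x y => by simpa using mul_max_of_nonneg x y hc)]
  rfl

lemma postV_vis {W X Y₁ Z : Type*} [Fintype W] [Nonempty W] [Fintype X] [Fintype Y₁]
    [Fintype Z] (π : X → ℝ) (g : W → X → ℝ) (p : ℝ) (hp0 : 0 ≤ p) (hp1 : p ≤ 1)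
    (C₁ : X → Y₁ → ℝ) (C : X → Z → ℝ) :
    postV π g (vis p C₁ C) = p * postV π g C₁ + (1 - p) * postV π g C := by
  unfold postV vis
  rw [Fintype.sum_sum_type]
  simp only [Sum.elim_inl, Sum.elim_inr]
  rw [Finset.mul_sum, Finset.mul_sum]
  congr 1
  · refine Finset.sum_congr rfl fun y _ => ?_
    rw [← sup'_const_mul_s14 _ _ p hp0]
    exact Finset.sup'_congr _ rfl fun w _ => by rw [Finset.mul_sum]; exact Finset.sum_congr rfl fun x _ => by ring
  · refine Finset.sum_congr rfl fun y _ => ?_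
    rw [← sup'_const_mul_s14 _ _ (1 - p) (by linarith)]
    exact Finset.sup'_congr _ rfl fun w _ => by rw [Finset.mul_sum]; exact Finset.sum_congr rfl fun x _ => by ring

/-- Relative monotonicity for visible choice. -/
theorem relative_monotonicity_visible_choice {W X Y₁ Y₂ : Type*}
    [Fintype W] [Nonempty W] [Fintype X] [Fintype Y₁] [Fintype Y₂]
    (C₁ : X → Y₁ → ℝ) (C₂ : X → Y₂ → ℝ)
    (h₁ : IsChannel C₁) (h₂ : IsChannel C₂)
    (π : X → ℝ) (hπ : IsPrior π) (g : W → X → ℝ) (hg : IsGain g)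
    (p : ℝ) (hp0 : 0 < p) (hp1 : p ≤ 1) :
    postV π g C₁ ≤ postV π g C₂ ↔
      ∀ (Z : Type) [Fintype Z] (C : X → Z → ℝ), IsChannel C →
        postV π g (vis p C₁ C) ≤ postV π g (vis p C₂ C) := by
  constructor
  · intro h Z _ C hC
    rw [postV_vis π g p hp0.le hp1, postV_vis π g p hp0.le hp1]
    have := mul_le_mul_of_nonneg_left h hp0.le
    linarith
  · intro h
    have key := h Unit (fun _ _ => (1:ℝ)) ⟨fun _ _ => zero_le_one, fun _ => by simp⟩
    rw [postV_vis π g p hp0.le hp1, postV_vis π g p hp0.le hp1] at key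
    have : p * postV π g C₁ ≤ p * postV π g C₂ := by linarith
    exact le_of_mul_le_mul_left this hp0
end

section
/- Converse relative monotonicity for hidden choice: let C₁ : X×Y₁ → ℝ and C₂ : X×Y₂ → ℝ be compatible channels, π a prior on X, g a gain function, and p ∈ (0,1]. If V_g[π, C₁ ⊕_p C] ≤ V_g[π, C₂ ⊕_p C] for every channel C compatible with C₁ and C₂, then V_g[π,C₁] ≤ V_g[π,C₂]. -/
open Finset

lemma postV_hid_convex {W X Ω : Type*} [Fintype W] [Nonempty W] [Fintype X] [Fintype Ω]
    (π : X → ℝ) (g : W → X → ℝ) (A B : X → Ω → ℝ) (p : ℝ) (hp0 : 0 ≤ p) (hp1 : p ≤ 1) :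
    postV π g (hid p A B) ≤ p * postV π g A + (1 - p) * postV π g B := by
  unfold postV hid
  rw [Finset.mul_sum, Finset.mul_sum, ← Finset.sum_add_distrib]
  refine Finset.sum_le_sum fun y _ => ?_
  refine Finset.sup'_le _ _ fun w _ => ?_
  have hsplit : (∑ x, (p * A x y + (1 - p) * B x y) * π x * g w x)
      = p * (∑ x, A x y * π x * g w x) + (1 - p) * (∑ x, B x y * π x * g w x) := by
    rw [Finset.mul_sum, Finset.mul_sum, ← Finset.sum_add_distrib]
    exact Finset.sum_congr rfl fun x _ => by ring
  rw [hsplit]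
  have hA := Finset.le_sup' (fun w => ∑ x, A x y * π x * g w x) (Finset.mem_univ w)
  have hB := Finset.le_sup' (fun w => ∑ x, B x y * π x * g w x) (Finset.mem_univ w)
  exact add_le_add (mul_le_mul_of_nonneg_left hA hp0)
    (mul_le_mul_of_nonneg_left hB (by linarith))

/-- Converse relative monotonicity for hidden choice. -/
theorem relative_monotonicity_hidden_choice_converse {W X Ω : Type*}
    [Fintype W] [Nonempty W] [Fintype X] [Fintype Ω]
    (Y₁ Y₂ : Finset Ω) (C₁ C₂ : X → Ω → ℝ)
    (h₁ : IsChannelOn Y₁ C₁) (h₂ : IsChannelOn Y₂ C₂)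
    (π : X → ℝ) (hπ : IsPrior π) (g : W → X → ℝ) (hg : IsGain g)
    (p : ℝ) (hp0 : 0 < p) (hp1 : p ≤ 1)
    (h : ∀ (S : Finset Ω) (C : X → Ω → ℝ), IsChannelOn S C →
      postV π g (hid p C₁ C) ≤ postV π g (hid p C₂ C)) :
    postV π g C₁ ≤ postV π g C₂ := by
  have key := h Y₁ C₁ h₁
  have e : hid p C₁ C₁ = C₁ := by
    funext x y; simp only [hid]; ring
  rw [e] at key
  have conv := postV_hid_convex π g C₂ C₁ p hp0.le hp1
  have : p * postV π g C₁ ≤ p * postV π g C₂ := by linarith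
  exact le_of_mul_le_mul_left this hp0
end

section
/- Reassociation of alternating nested hidden choices: let n be a positive integer, A₀, A₁, …, A_n pairwise compatible channels with input set X, and q, p ∈ [0,1] not both 0. Define t_{2i} = 1 − (1−q)^{i+1}·(1−p)^i and t_{2i+1} = 1 − (1−q)^{i+1}·(1−p)^{i+1} for i ≥ 0. Then the right-nested hidden choice A₀ ⊕_{r₀} (A₁ ⊕_{r₁} ( … ⊕_{r_{n−1}} A_n)…), where r_i = q if i is even and r_i = p if i is odd, equals the left-nested hidden choice ((…((A₀ ⊕_{t₀/t₁} A₁) ⊕_{t₁/t₂} A₂) … ) ⊕_{t_{n−2}/t_{n−1}} A_{n−1}) ⊕_{t_{n−1}} A_n (note that t_k > 0 for all k ≥ 1 since q and p are not both 0). -/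
open Finset

/-- `rightNest A r i k` is the right-nested hidden choice
`A i ⊕_{r i} (A (i+1) ⊕_{r (i+1)} (… ⊕_{r (i+k-1)} A (i+k))…)`. -/
noncomputable def rightNest {X Ω : Type*} (A : ℕ → X → Ω → ℝ) (r : ℕ → ℝ) : ℕ → ℕ → X → Ω → ℝ
  | i, 0 => A i
  | i, k + 1 => hid (r i) (A i) (rightNest A r (i + 1) k)

/-- `leftNest A t k` is the left-nested hidden choice
`((…((A 0 ⊕_{t 0 / t 1} A 1) ⊕_{t 1 / t 2} A 2) …) ⊕_{t (k-1) / t k} A k)`. -/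
noncomputable def leftNest {X Ω : Type*} (A : ℕ → X → Ω → ℝ) (t : ℕ → ℝ) : ℕ → X → Ω → ℝ
  | 0 => A 0
  | k + 1 => hid (t k / t (k + 1)) (leftNest A t k) (A (k + 1))

/-- Reassociation of alternating nested hidden choices (Lemma on Crowds). -/
theorem reassociation_of_nested_hidden_choices {X Ω : Type*} [Fintype Ω]
    (n : ℕ) (hn : 0 < n)
    (A : ℕ → X → Ω → ℝ) (S : ℕ → Finset Ω)
    (hA : ∀ i ≤ n, IsChannelOn (S i) (A i))
    (q p : ℝ) (hq : q ∈ Set.Icc (0:ℝ) 1) (hp : p ∈ Set.Icc (0:ℝ) 1)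
    (hqp : ¬(q = 0 ∧ p = 0))
    (t : ℕ → ℝ)
    (ht_even : ∀ i, t (2 * i) = 1 - (1 - q) ^ (i + 1) * (1 - p) ^ i)
    (ht_odd : ∀ i, t (2 * i + 1) = 1 - (1 - q) ^ (i + 1) * (1 - p) ^ (i + 1)) :
    rightNest A (fun i => if Even i then q else p) 0 n
      = hid (t (n - 1)) (leftNest A t (n - 1)) (A n) := by

  obtain ⟨hq0, hq1⟩ := hq
  obtain ⟨hp0, hp1⟩ := hp
  set r : ℕ → ℝ := fun i => if Even i then q else p with hr
  set tp : ℕ → ℝ := fun j => if j = 0 then 0 else t (j - 1) with htp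
  have htp0 : tp 0 = 0 := by simp [htp]
  have htps : ∀ k, tp (k + 1) = t k := by intro k; simp [htp]
  have hqp' : 0 < q ∨ 0 < p := by
    rcases eq_or_lt_of_le hq0 with h | h
    · rcases eq_or_lt_of_le hp0 with h' | h'
      · exact absurd ⟨h.symm, h'.symm⟩ hqp
      · exact Or.inr h'
    · exact Or.inl h
  -- descent identity
  have hkey : ∀ j, 1 - t j = (1 - tp j) * (1 - r j) := by
    intro j
    rcases Nat.even_or_odd j with he | ho
    · obtain ⟨i, hi⟩ := he
      have hj : j = 2 * i := by omega
      subst hj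
      have hrj : r (2 * i) = q := by simp [hr]
      rw [hrj, ht_even i]
      cases i with
      | zero => simp [htp0]
      | succ k =>
        have h2 : tp (2 * (k + 1)) = t (2 * k + 1) := by
          have h3 : 2 * (k + 1) = (2 * k + 1) + 1 := by ring
          rw [h3, htps]
        rw [h2, ht_odd k]; ring
    · obtain ⟨i, hi⟩ := ho
      subst hi
      have hrj : r (2 * i + 1) = p := by simp [hr, Nat.even_add_one]
      rw [hrj, htps, ht_even i, ht_odd i]; ring
  have hlt : ∀ a b : ℕ, (a ≠ 0 ∧ 0 < q) ∨ (b ≠ 0 ∧ 0 < p) → (1-q)^a * (1-p)^b < 1 := by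
    intro a b h
    have h1 : (0:ℝ) ≤ (1-q)^a := pow_nonneg (by linarith) _
    have h2 : (0:ℝ) ≤ (1-p)^b := pow_nonneg (by linarith) _
    have h3 : (1-q)^a ≤ 1 := pow_le_one₀ (by linarith) (by linarith)
    have h4 : (1-p)^b ≤ 1 := pow_le_one₀ (by linarith) (by linarith)
    rcases h with ⟨ha, hq'⟩ | ⟨hb, hp'⟩
    · have h5 : (1-q)^a < 1 := pow_lt_one₀ (by linarith) (by linarith) ha
      nlinarith
    · have h5 : (1-p)^b < 1 := pow_lt_one₀ (by linarith) (by linarith) hb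
      nlinarith
  have hpos : ∀ k, 0 < t (k + 1) := by
    intro k
    rcases Nat.even_or_odd (k+1) with he | ho
    · obtain ⟨i, hi⟩ := he
      have hj : k + 1 = 2 * i := by omega
      rw [hj, ht_even i]
      rcases hqp' with h | h
      · have := hlt (i+1) i (Or.inl ⟨by omega, h⟩); linarith
      · have := hlt (i+1) i (Or.inr ⟨by omega, h⟩); linarith
    · obtain ⟨i, hi⟩ := ho
      rw [hi, ht_odd i]
      rcases hqp' with h | h
      · have := hlt (i+1) (i+1) (Or.inl ⟨by omega, h⟩); linarith
      · have := hlt (i+1) (i+1) (Or.inr ⟨by omega, h⟩); linarith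
  have hs : ∀ j, (∏ l ∈ Finset.range j, (1 - r l)) = 1 - tp j := by
    intro j
    induction j with
    | zero => simp [htp0]
    | succ k ih =>
      rw [Finset.prod_range_succ, ih, htps]
      exact (hkey k).symm
  -- sum formula for rightNest
  have hR : ∀ k m (x : X) (y : Ω), rightNest A r m k x y
      = (∑ j ∈ Finset.range k,
          (∏ l ∈ Finset.range j, (1 - r (m + l))) * r (m + j) * A (m + j) x y)
        + (∏ l ∈ Finset.range k, (1 - r (m + l))) * A (m + k) x y := by
    intro k
    induction k with
    | zero => intro m x y; simp [rightNest]
    | succ k ih =>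
      intro m x y
      have harg : ∀ l, m + 1 + l = m + (l + 1) := fun l => by omega
      rw [rightNest]
      simp only [hid]
      rw [ih (m+1) x y]
      rw [Finset.sum_range_succ', Finset.prod_range_succ' (fun l => 1 - r (m + l)) k]
      rw [mul_add, Finset.mul_sum]
      have hsum : ∀ j ∈ Finset.range k,
          (1 - r m) * ((∏ l ∈ Finset.range j, (1 - r (m + 1 + l))) * r (m + 1 + j)
            * A (m + 1 + j) x y)
          = (∏ l ∈ Finset.range (j+1), (1 - r (m + l))) * r (m + (j+1)) * A (m + (j+1)) x y := by
        intro j _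
        rw [Finset.prod_range_succ']
        simp only [harg, Nat.add_zero]
        ring
      rw [Finset.sum_congr rfl hsum]
      simp only [harg, Nat.add_zero, Finset.prod_range_zero, one_mul]
      ring
  -- sum formula for leftNest
  have hL : ∀ k (x : X) (y : Ω), t k * leftNest A t k x y
      = ∑ j ∈ Finset.range (k+1), (t j - tp j) * A j x y := by
    intro k
    induction k with
    | zero => intro x y; simp [leftNest, htp0]
    | succ k ih =>
      intro x y
      have hk1 : t (k+1) ≠ 0 := (hpos k).ne'
      rw [leftNest]
      simp only [hid]
      rw [Finset.sum_range_succ, ← ih x y, htps]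
      field_simp
  obtain ⟨m, rfl⟩ : ∃ m, n = m + 1 := ⟨n - 1, by omega⟩
  funext x y
  simp only [Nat.add_sub_cancel, hid]
  rw [hR (m+1) 0 x y]
  simp only [Nat.zero_add]
  have hterm : ∀ j ∈ Finset.range (m+1),
      (∏ l ∈ Finset.range j, (1 - r l)) * r j * A j x y = (t j - tp j) * A j x y := by
    intro j _
    rw [hs j]
    have : (1 - tp j) * r j = t j - tp j := by linear_combination hkey j
    rw [this]
  rw [Finset.sum_congr rfl hterm, hs (m+1), htps m, ← hL m x y]
end

section
/- Vulnerability bound for nested hidden choices of decreasingly vulnerable channels: let π be a prior on a finite set X and g a gain function. Let n ≥ 1 and A₁, …, A_n be channels with input set X such that i < j implies V_g[π,A_i] ≥ V_g[π,A_j], and let p₁, …, p_{n−1} ∈ [0,1]. Then V_g[π, A₁ ⊕_{p₁} (A₂ ⊕_{p₂} ( … ⊕_{p_{n−1}} A_n)…)] ≤ V_g[π, A₁]. -/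
open Finset

lemma postV_hid_le {W X Ω : Type*} [Fintype W] [Nonempty W] [Fintype X] [Fintype Ω]
    (π : X → ℝ) (g : W → X → ℝ) (q : ℝ) (hq : q ∈ Set.Icc (0:ℝ) 1)
    (C D : X → Ω → ℝ) :
    postV π g (hid q C D) ≤ q * postV π g C + (1 - q) * postV π g D := by
  obtain ⟨hq0, hq1⟩ := hq
  have hq1' : (0:ℝ) ≤ 1 - q := by linarith
  unfold postV hid
  rw [Finset.mul_sum, Finset.mul_sum, ← Finset.sum_add_distrib]
  refine Finset.sum_le_sum fun y _ => ?_
  apply Finset.sup'_le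
  intro w _
  have h1 : ∑ x, (q * C x y + (1 - q) * D x y) * π x * g w x
      = q * ∑ x, C x y * π x * g w x + (1 - q) * ∑ x, D x y * π x * g w x := by
    rw [Finset.mul_sum, Finset.mul_sum, ← Finset.sum_add_distrib]
    exact Finset.sum_congr rfl fun x _ => by ring
  rw [h1]
  exact add_le_add
    (mul_le_mul_of_nonneg_left
      (Finset.le_sup' (fun w => ∑ x, C x y * π x * g w x) (Finset.mem_univ w)) hq0)
    (mul_le_mul_of_nonneg_left
      (Finset.le_sup' (fun w => ∑ x, D x y * π x * g w x) (Finset.mem_univ w)) hq1')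

/-- Vulnerability bound for nested hidden choices of decreasingly vulnerable
channels (here `A 0, …, A (n-1)` play the role of `A₁, …, A_n`). -/
theorem vulnerability_bound_nested_hidden_choices {W X Ω : Type*}
    [Fintype W] [Nonempty W] [Fintype X] [Fintype Ω]
    (π : X → ℝ) (hπ : IsPrior π) (g : W → X → ℝ) (hg : IsGain g)
    (n : ℕ) (hn : 1 ≤ n)
    (A : ℕ → X → Ω → ℝ) (S : ℕ → Finset Ω)
    (hA : ∀ i < n, IsChannelOn (S i) (A i))
    (hmono : ∀ i j, i < j → j < n → postV π g (A j) ≤ postV π g (A i))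
    (p : ℕ → ℝ) (hp : ∀ i, p i ∈ Set.Icc (0:ℝ) 1) :
    postV π g (rightNest A p 0 (n - 1)) ≤ postV π g (A 0) := by
  suffices h : ∀ k i, i + k < n → postV π g (rightNest A p i k) ≤ postV π g (A i) by
    exact h (n - 1) 0 (by omega)
  intro k
  induction k with
  | zero => intro i _; simp [rightNest]
  | succ k ih =>
    intro i hik
    have h1 : postV π g (rightNest A p (i + 1) k) ≤ postV π g (A (i + 1)) :=
      ih (i + 1) (by omega)
    have h2 : postV π g (A (i + 1)) ≤ postV π g (A i) :=
      hmono i (i + 1) (by omega) (by omega)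
    have h3 := postV_hid_le π g (p i) (hp i) (A i) (rightNest A p (i + 1) k)
    obtain ⟨hp0, hp1⟩ := hp i
    calc postV π g (rightNest A p i (k + 1)) = postV π g (hid (p i) (A i) (rightNest A p (i + 1) k)) := rfl
    _ ≤ p i * postV π g (A i) + (1 - p i) * postV π g (rightNest A p (i + 1) k) := h3
    _ ≤ p i * postV π g (A i) + (1 - p i) * postV π g (A i) := by nlinarith
    _ = postV π g (A i) := by ring
end
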